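/- For positive integers x, y and positive real numbers z, w such that w - z is a positive integer with w - z ≥ x, the identity ∑_{j=x}^{w-z} C(j,y)·C(w-j,z) = ∑_{i=max(0, x+y+z-w)}^{y} C(x,i)·C(w-x+1, z+y-i+1) holds, where C(a,b) denotes the generalized binomial coefficient Γ(a+1)/(Γ(b+1)Γ(a-b+1)). -/

import Mathlib

open SimpleGraph Finset Nat

/-- A set of edges forms a connected (sub)graph: the graph it spans,
induced on its support, is connected. -/
def EdgeSetConnected (V : Type*) (S : Set (Sym2 V)) : Prop :=
  ((SimpleGraph.fromEdgeSet S).induce (SimpleGraph.fromEdgeSet S).support).Connected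

/-- A shelling of a graph `G`: an ordering of its edges such that every
initial segment forms a connected subgraph. -/
def IsShelling {V : Type*} (G : SimpleGraph V)
    (σ : Fin (Nat.card G.edgeSet) ≃ G.edgeSet) : Prop :=
  ∀ k : Fin (Nat.card G.edgeSet),
    EdgeSetConnected V {e | ∃ i, i ≤ k ∧ (σ i : Sym2 V) = e}

/-- The number of shellings of `G`. -/
noncomputable def shellingCount {V : Type*} (G : SimpleGraph V) : ℕ :=
  Nat.card {σ : Fin (Nat.card G.edgeSet) ≃ G.edgeSet // IsShelling G σ}

/-- The number of shellings of `G` rooted at `v`, i.e. whose first edge is incident to `v`. -/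
noncomputable def rootedShellingCount {V : Type*} (G : SimpleGraph V) (v : V) : ℕ :=
  Nat.card {σ : Fin (Nat.card G.edgeSet) ≃ G.edgeSet //
    IsShelling G σ ∧ ∃ h : 0 < Nat.card G.edgeSet, v ∈ (σ ⟨0, h⟩ : Sym2 V)}

/-- The number of vertices of the subtree rooted at `u` when the tree `G` is
rooted at `v`: vertices `w` such that `u` lies on the (unique) path from `v` to `w`. -/
noncomputable def subtreeSize {V : Type*} (G : SimpleGraph V) (v u : V) : ℕ :=
  Nat.card {w : V | ∀ p : G.Path v w, u ∈ (p : G.Walk v w).support}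

/-- Generalized binomial coefficient via the Gamma function. -/
noncomputable def genBinom (x y : ℝ) : ℝ :=
  Real.Gamma (x + 1) / (Real.Gamma (y + 1) * Real.Gamma (x - y + 1))

lemma genBinom_eq_zero {a b : ℝ} (m : ℕ) (h : a - b + 1 = -(m : ℝ)) : genBinom a b = 0 := by
  unfold genBinom
  rw [h, Real.Gamma_neg_nat_eq_zero, mul_zero, div_zero]

lemma genBinom_self {a : ℝ} (ha : 0 < a + 1) : genBinom a a = 1 := by
  unfold genBinom
  rw [sub_self, zero_add, Real.Gamma_one, mul_one,
    div_self (Real.Gamma_pos_of_pos ha).ne']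

lemma genBinom_nat (n k : ℕ) : genBinom n k = (n.choose k : ℝ) := by
  rcases le_or_gt k n with h | h
  · unfold genBinom
    rw [Nat.cast_choose ℝ h]
    have h1 : (n : ℝ) - k + 1 = ((n - k : ℕ) : ℝ) + 1 := by
      rw [Nat.cast_sub h]
    rw [h1, Real.Gamma_nat_eq_factorial, Real.Gamma_nat_eq_factorial,
      Real.Gamma_nat_eq_factorial]
  · rw [Nat.choose_eq_zero_of_lt h, Nat.cast_zero]
    apply genBinom_eq_zero (k - n - 1)
    have h1 : (k - n - 1) + (n + 1) = k := by omega
    have h2 : ((k - n - 1 : ℕ) : ℝ) + ((n : ℝ) + 1) = k := by exact_mod_cast h1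
    linarith

lemma genBinom_pascal {a b : ℝ} (ha : 0 < a + 1) (hb : 0 < b + 1) (m : ℤ) (hm : a - b = m) :
    genBinom (a + 1) (b + 1) = genBinom a (b + 1) + genBinom a b := by
  have hA : Real.Gamma (a + 1) ≠ 0 := (Real.Gamma_pos_of_pos ha).ne'
  have hB : Real.Gamma (b + 1) ≠ 0 := (Real.Gamma_pos_of_pos hb).ne'
  have hB2 : Real.Gamma (b + 1 + 1) ≠ 0 := (Real.Gamma_pos_of_pos (by linarith)).ne'
  unfold genBinom
  have e1 : a + 1 - (b + 1) + 1 = a - b + 1 := by ring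
  have e2 : a - (b + 1) + 1 = a - b := by ring
  rw [e1, e2]
  rcases lt_trichotomy m 0 with hm0 | hm0 | hm0
  · -- a - b is a negative integer: everything vanishes
    have hp : ∃ p : ℕ, (m : ℝ) = -((p : ℝ) + 1) := by
      refine ⟨(-(m + 1)).toNat, ?_⟩
      have : ((-(m + 1)).toNat : ℤ) = -(m + 1) := Int.toNat_of_nonneg (by omega)
      have := congrArg (fun t : ℤ => (t : ℝ)) this
      push_cast at this
      linarith
    obtain ⟨p, hp⟩ := hp
    have h1 : a - b + 1 = -(p : ℝ) := by rw [hm, hp]; ring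
    have h2 : a - b = -((p + 1 : ℕ) : ℝ) := by rw [hm, hp]; push_cast; ring
    rw [h1, h2, Real.Gamma_neg_nat_eq_zero, Real.Gamma_neg_nat_eq_zero]
    simp
  · -- a = b
    have hab : a = b := by
      have : (m : ℝ) = 0 := by exact_mod_cast congrArg (fun t : ℤ => (t : ℝ)) hm0
      linarith [hm]
    subst hab
    rw [sub_self, zero_add, Real.Gamma_one, Real.Gamma_zero, mul_zero, div_zero,
      mul_one, mul_one, zero_add, div_self hB2, div_self hA]
  · -- a - b ≥ 1
    have hab : (0 : ℝ) < a - b := by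
      have : (1 : ℝ) ≤ (m : ℝ) := by exact_mod_cast hm0
      linarith [hm]
    have hM : Real.Gamma (a - b) ≠ 0 := (Real.Gamma_pos_of_pos hab).ne'
    rw [show a + 1 + 1 = (a + 1) + 1 from rfl, Real.Gamma_add_one (by linarith : a + 1 ≠ 0),
      show b + 1 + 1 = (b + 1) + 1 from rfl, Real.Gamma_add_one (by linarith : b + 1 ≠ 0),
      show a - b + 1 = (a - b) + 1 from rfl, Real.Gamma_add_one (by linarith : a - b ≠ 0)]
    field_simp
    ring

lemma genBinom_aux (y : ℕ) (z w : ℝ) (hz : 0 < z) (N : ℕ) (hwz : w - z = N) :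
    ∀ d x : ℕ, x + d = N →
      ∑ j ∈ Finset.Icc x N, (j.choose y : ℝ) * genBinom (w - j) z =
      ∑ i ∈ Finset.range (y + 1), (x.choose i : ℝ) * genBinom (w - x + 1) (z + y - i + 1) := by
  intro d
  induction d with
  | zero =>
    intro x hx
    obtain rfl : x = N := by omega
    have hwx : w - (x : ℝ) = z := by linarith
    rw [Finset.Icc_self, Finset.sum_singleton, hwx, genBinom_self (by linarith)]
    rw [Finset.sum_eq_single_of_mem y (by simp)]
    · have e : z + (y : ℝ) - y + 1 = z + 1 := by ring
      rw [e, genBinom_self (by linarith : (0:ℝ) < z + 1 + 1)]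
    · intro i hi hiy
      have hilt : i < y := by
        simp only [Finset.mem_range] at hi; omega
      have h1 : (y - i - 1) + (i + 1) = y := by omega
      have h2 : ((y - i - 1 : ℕ) : ℝ) + ((i : ℝ) + 1) = y := by exact_mod_cast h1
      rw [genBinom_eq_zero (y - i - 1) (by linarith : z + 1 - (z + ↑y - ↑i + 1) + 1 = -(↑(y - i - 1) : ℝ)), mul_zero]
  | succ d ih =>
    intro x hx
    have IH := ih (x + 1) (by omega)
    have hxN : x < N := by omega
    have hcast : (x : ℝ) + 1 ≤ (N : ℝ) := by exact_mod_cast hxN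
    have hwx : w - (x : ℝ) = z + ((N : ℝ) - x) := by linarith
    -- split off the bottom term of the LHS
    have hsplit : Finset.Icc x N = insert x (Finset.Icc (x + 1) N) := by
      ext a; simp only [Finset.mem_Icc, Finset.mem_insert]; omega
    rw [hsplit, Finset.sum_insert (by simp), IH]
    -- rewrite w - (x+1) + 1 = w - x inside the sum
    have hw1 : ∀ i ∈ Finset.range (y + 1),
        ((x + 1).choose i : ℝ) * genBinom (w - (↑(x + 1) : ℝ) + 1) (z + y - i + 1)
          = ((x + 1).choose i : ℝ) * genBinom (w - x) (z + y - i + 1) := by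
      intro i _
      have : w - (↑(x + 1) : ℝ) + 1 = w - x := by push_cast; ring
      rw [this]
    rw [Finset.sum_congr rfl hw1]
    -- Pascal on the RHS
    have hG : ∀ i ∈ Finset.range (y + 1),
        (x.choose i : ℝ) * genBinom (w - x + 1) (z + y - i + 1)
          = (x.choose i : ℝ) * genBinom (w - x) (z + y - i + 1)
            + (x.choose i : ℝ) * genBinom (w - x) (z + y - i) := by
      intro i hi
      have hiy : i ≤ y := by simp only [Finset.mem_range] at hi; omega
      have hiyc : (i : ℝ) ≤ y := by exact_mod_cast hiy
      have hm : (w - ↑x) - (z + ↑y - ↑i) = (((N : ℤ) - x - y + i : ℤ) : ℝ) := by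
        push_cast; linarith
      rw [genBinom_pascal (by linarith) (by linarith) ((N : ℤ) - x - y + i) hm, mul_add]
    rw [Finset.sum_congr rfl hG, Finset.sum_add_distrib]
    -- first sum: peel off bottom
    have hA : (∑ i ∈ Finset.range (y + 1), (x.choose i : ℝ) * genBinom (w - x) (z + y - i + 1))
        = (∑ i ∈ Finset.range y, (x.choose (i + 1) : ℝ) * genBinom (w - x) (z + y - i))
          + genBinom (w - x) (z + y + 1) := by
      rw [Finset.sum_range_succ']
      congr 1
      · refine Finset.sum_congr rfl fun i _ => ?_
        have : z + (y : ℝ) - (↑(i + 1) : ℝ) + 1 = z + y - i := by push_cast; ring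
        rw [this]
      · simp
    -- second sum: peel off top
    have hB : (∑ i ∈ Finset.range (y + 1), (x.choose i : ℝ) * genBinom (w - x) (z + y - i))
        = (∑ i ∈ Finset.range y, (x.choose i : ℝ) * genBinom (w - x) (z + y - i))
          + (x.choose y : ℝ) * genBinom (w - x) z := by
      rw [Finset.sum_range_succ]
      congr 2
      ring
    -- left-hand sum: peel off bottom and apply Pascal for naturals
    have hC : (∑ i ∈ Finset.range (y + 1), ((x + 1).choose i : ℝ) * genBinom (w - x) (z + y - i + 1))
        = (∑ i ∈ Finset.range y,
            ((x.choose i : ℝ) * genBinom (w - x) (z + y - i)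
              + (x.choose (i + 1) : ℝ) * genBinom (w - x) (z + y - i)))
          + genBinom (w - x) (z + y + 1) := by
      rw [Finset.sum_range_succ']
      congr 1
      · refine Finset.sum_congr rfl fun i _ => ?_
        have e : z + (y : ℝ) - (↑(i + 1) : ℝ) + 1 = z + y - i := by push_cast; ring
        rw [e, Nat.choose_succ_succ]
        push_cast
        ring
      · simp
    rw [hA, hB, hC, Finset.sum_add_distrib]
    ring

/-- For positive integers `x, y` and positive reals `z, w` with `w - z` a positive
integer `N ≥ x`, the identity
`∑_{j=x}^{w-z} C(j,y) C(w-j,z) = ∑_{i=max(0,x+y+z-w)}^{y} C(x,i) C(w-x+1, z+y-i+1)`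
holds for generalized binomial coefficients. -/
theorem genBinom_sum_identity (x y : ℕ) (hx : 0 < x) (hy : 0 < y) (z w : ℝ)
    (hz : 0 < z) (hw : 0 < w) (N : ℕ) (hN : 0 < N) (hwz : w - z = N) (hxN : x ≤ N) :
    ∑ j ∈ Finset.Icc x N, genBinom (j : ℝ) (y : ℝ) * genBinom (w - j) z =
      ∑ i ∈ Finset.Icc (x + y - N) y,
        genBinom (x : ℝ) (i : ℝ) * genBinom (w - x + 1) (z + y - i + 1) := by
  have key := genBinom_aux y z w hz N hwz (N - x) x (by omega)
  have h1 : ∑ j ∈ Finset.Icc x N, genBinom (j : ℝ) (y : ℝ) * genBinom (w - j) z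
      = ∑ j ∈ Finset.Icc x N, (j.choose y : ℝ) * genBinom (w - j) z :=
    Finset.sum_congr rfl fun j _ => by rw [genBinom_nat]
  rw [h1, key]
  have hsub : Finset.Icc (x + y - N) y ⊆ Finset.range (y + 1) := by
    intro i hi
    simp only [Finset.mem_Icc] at hi
    simp only [Finset.mem_range]
    omega
  have hzero : ∀ i ∈ Finset.range (y + 1), i ∉ Finset.Icc (x + y - N) y →
      (x.choose i : ℝ) * genBinom (w - x + 1) (z + y - i + 1) = 0 := by
    intro i hi hni
    simp only [Finset.mem_range] at hi
    simp only [Finset.mem_Icc] at hni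
    have hlt : N + i + 1 ≤ x + y := by omega
    have h1 : (x + y - N - i - 1) + (N + i + 1) = x + y := by omega
    have h2 : ((x + y - N - i - 1 : ℕ) : ℝ) + ((N : ℝ) + i + 1) = (x : ℝ) + y := by
      exact_mod_cast h1
    rw [genBinom_eq_zero (x + y - N - i - 1) (by linarith), mul_zero]
  rw [← Finset.sum_subset hsub hzero]
  exact Finset.sum_congr rfl fun i _ => by rw [genBinom_nat]
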